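/- arXiv:1804.10154 — 2 statements merged into one kernel-verified Lean document; each statement's English description precedes it below -/
import Mathlib

section
/- Let a, b > 0 and β ∈ ℝ. Then there exists a constant C > 0 (depending only on a, b, β) such that for every s ≥ 1, ∫₀^∞ t^{β−1} e^{−a t − b s²/t} dt ≤ C · e^{−(1/2)√(ab) · s}. -/
open MeasureTheory Real Set

theorem aux_int (a b β : ℝ) (ha : 0 < a) (hb : 0 < b) :
    IntegrableOn (fun t : ℝ => t ^ (β - 1) * Real.exp (-(a/2) * t - b / (2*t))) (Set.Ioi 0) := by
  have hmeas : Measurable fun t : ℝ => t ^ (β - 1) * Real.exp (-(a/2) * t - b / (2*t)) := by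
    fun_prop
  have hIoi : Set.Ioc (0:ℝ) 1 ∪ Set.Ioi 1 = Set.Ioi 0 := Set.Ioc_union_Ioi_eq_Ioi zero_le_one
  rw [← hIoi]
  apply IntegrableOn.union
  · -- near zero
    set n : ℕ := ⌈-β⌉₊ + 1 with hn
    have hnβ : -β < (n:ℝ) := by
      have := Nat.le_ceil (-β)
      push_cast [hn]; linarith
    have hbound : IntegrableOn (fun t : ℝ => (n.factorial : ℝ) * (2/b)^n * t ^ (β - 1 + n)) (Set.Ioc 0 1) := by
      apply Integrable.const_mul
      have := intervalIntegral.intervalIntegrable_rpow' (a := 0) (b := 1) (r := β - 1 + n) (by linarith)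
      rwa [intervalIntegrable_iff_integrableOn_Ioc_of_le zero_le_one] at this
    apply hbound.mono' (hmeas.aestronglyMeasurable.restrict)
    filter_upwards [ae_restrict_mem measurableSet_Ioc] with t ht
    obtain ⟨ht0, ht1⟩ := ht
    rw [norm_of_nonneg (by positivity)]
    have hx : (0:ℝ) < b / (2*t) := by positivity
    have h1 : Real.exp (-(a/2) * t - b / (2*t)) ≤ Real.exp (-(b/(2*t))) := by
      apply Real.exp_le_exp.2; nlinarith
    have h2 : Real.exp (-(b/(2*t))) ≤ (n.factorial : ℝ) * (2/b)^n * t^(n:ℕ) := by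
      have hple := Real.pow_div_factorial_le_exp _ hx.le n
      have hinv : (Real.exp (b/(2*t)))⁻¹ ≤ ((b/(2*t))^n / (n.factorial : ℝ))⁻¹ :=
        inv_anti₀ (by positivity) hple
      rw [Real.exp_neg]
      refine hinv.trans (le_of_eq ?_)
      rw [inv_div]
      field_simp
      simp only [← mul_pow]
      field_simp
      rw [one_pow]
    calc t ^ (β - 1) * Real.exp (-(a/2) * t - b / (2*t))
        ≤ t ^ (β - 1) * ((n.factorial : ℝ) * (2/b)^n * t^(n:ℕ)) := by
          exact mul_le_mul_of_nonneg_left (h1.trans h2) (Real.rpow_nonneg ht0.le _)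
      _ = (n.factorial : ℝ) * (2/b)^n * t ^ (β - 1 + n) := by
          rw [Real.rpow_add ht0, Real.rpow_natCast]; ring
  · -- at infinity
    set r : ℝ := max (β - 1) 0 with hr
    have hint : IntegrableOn (fun t : ℝ => t ^ r * Real.exp (-(a/2) * t)) (Set.Ioi 1) := by
      have := integrableOn_rpow_mul_exp_neg_mul_rpow (p := 1) (s := r) (b := a/2)
        (lt_of_lt_of_le neg_one_lt_zero (le_max_right _ _)) zero_lt_one (by positivity)
      simp only [Real.rpow_one] at this
      exact this.mono_set (Set.Ioi_subset_Ioi zero_le_one)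
    apply hint.mono' (hmeas.aestronglyMeasurable.restrict)
    filter_upwards [ae_restrict_mem measurableSet_Ioi] with t ht
    have ht0 : (0:ℝ) < t := lt_trans zero_lt_one ht
    rw [norm_of_nonneg (by positivity)]
    apply mul_le_mul
    · exact Real.rpow_le_rpow_of_exponent_le ht.le (le_max_left _ _)
    · apply Real.exp_le_exp.2
      have : 0 < b / (2*t) := by positivity
      linarith
    · positivity
    · positivity

/-- Let `a, b > 0` and `β ∈ ℝ`. Then there exists `C > 0`
(depending only on `a, b, β`) such that for every `s ≥ 1`,
`∫₀^∞ t^{β−1} e^{−a t − b s²/t} dt ≤ C · e^{−(1/2)√(ab)·s}`. -/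
theorem stmt_9 (a b β : ℝ) (ha : 0 < a) (hb : 0 < b) :
    ∃ C : ℝ, 0 < C ∧ ∀ s : ℝ, 1 ≤ s →
      (∫ t in Set.Ioi (0 : ℝ),
          t ^ (β - 1) * Real.exp (-a * t - b * s ^ 2 / t)) ≤
        C * Real.exp (-(1 / 2) * Real.sqrt (a * b) * s) := by
  set g : ℝ → ℝ := fun t => t ^ (β - 1) * Real.exp (-(a/2) * t - b / (2*t)) with hg
  have hgint : IntegrableOn g (Set.Ioi 0) := aux_int a b β ha hb
  have hgnn : 0 ≤ ∫ t in Set.Ioi (0:ℝ), g t :=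
    setIntegral_nonneg measurableSet_Ioi fun t ht => by
      have ht0 : (0:ℝ) < t := ht
      rw [hg]; positivity
  refine ⟨(∫ t in Set.Ioi (0:ℝ), g t) + 1, by linarith, fun s hs => ?_⟩
  set E : ℝ := Real.exp (-(1 / 2) * Real.sqrt (a * b) * s) with hE
  have hE0 : 0 < E := Real.exp_pos _
  -- key pointwise inequality
  have key : ∀ t ∈ Set.Ioi (0:ℝ),
      t ^ (β - 1) * Real.exp (-a * t - b * s ^ 2 / t) ≤ g t * E := by
    intro t ht
    have ht0 : (0:ℝ) < t := ht
    have hexp : Real.exp (-a * t - b * s ^ 2 / t) ≤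
        Real.exp (-(a/2) * t - b / (2*t)) * E := by
      rw [hE, ← Real.exp_add, Real.exp_le_exp]
      have hsa := Real.sq_sqrt ha.le
      have hsb := Real.sq_sqrt hb.le
      have hc : Real.sqrt (a*b) = Real.sqrt a * Real.sqrt b := Real.sqrt_mul ha.le b
      have hsa0 := Real.sqrt_nonneg a
      have hsb0 := Real.sqrt_nonneg b
      rw [← mul_le_mul_iff_of_pos_right ht0]
      have hamgm : 2 * (Real.sqrt a * t) * (Real.sqrt b * s) ≤ a * t^2 + b * s^2 := by
        nlinarith [sq_nonneg (Real.sqrt a * t - Real.sqrt b * s)]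
      have hst : 0 < t * s := mul_pos ht0 (lt_of_lt_of_le zero_lt_one hs)
      rw [show (-a * t - b * s ^ 2 / t) * t = -(a * t ^ 2) - b * s ^ 2 by
          field_simp,
        show (-(a / 2) * t - b / (2 * t) + -(1 / 2) * Real.sqrt (a * b) * s) * t
            = -(a / 2 * t ^ 2) - b / 2 + -(1 / 2) * (Real.sqrt a * Real.sqrt b) * (s * t) by
          rw [hc]; field_simp]
      nlinarith [hamgm, hst, mul_nonneg (mul_nonneg hsa0 hsb0) hst.le, sq_nonneg (s - 1), hb.le]
    calc t ^ (β - 1) * Real.exp (-a * t - b * s ^ 2 / t)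
        ≤ t ^ (β - 1) * (Real.exp (-(a/2) * t - b / (2*t)) * E) :=
          mul_le_mul_of_nonneg_left hexp (Real.rpow_nonneg ht0.le _)
      _ = g t * E := by rw [hg]; ring
  have hfint : IntegrableOn (fun t => t ^ (β - 1) * Real.exp (-a * t - b * s ^ 2 / t))
      (Set.Ioi 0) := by
    have hE1 : E ≤ 1 := by
      rw [hE, Real.exp_le_one_iff]
      have : 0 ≤ Real.sqrt (a*b) * s := mul_nonneg (Real.sqrt_nonneg _) (by linarith)
      nlinarith
    have hm : Measurable fun t : ℝ => t ^ (β - 1) * Real.exp (-a * t - b * s ^ 2 / t) := by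
      fun_prop
    apply hgint.mono' hm.aestronglyMeasurable.restrict
    filter_upwards [ae_restrict_mem measurableSet_Ioi] with t ht
    have ht0 : (0:ℝ) < t := ht
    rw [norm_of_nonneg (by positivity)]
    calc t ^ (β - 1) * Real.exp (-a * t - b * s ^ 2 / t) ≤ g t * E := key t ht
      _ ≤ g t * 1 := by
          apply mul_le_mul_of_nonneg_left hE1
          rw [hg]; positivity
      _ = g t := mul_one _
  calc (∫ t in Set.Ioi (0:ℝ), t ^ (β - 1) * Real.exp (-a * t - b * s ^ 2 / t))
      ≤ ∫ t in Set.Ioi (0:ℝ), g t * E :=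
        setIntegral_mono_on hfint (hgint.mul_const E) measurableSet_Ioi key
    _ = (∫ t in Set.Ioi (0:ℝ), g t) * E := by rw [integral_mul_const]
    _ ≤ ((∫ t in Set.Ioi (0:ℝ), g t) + 1) * E := by
        apply mul_le_mul_of_nonneg_right _ hE0.le
        linarith
end

section
/- Let G be a Lie group with right Haar measure ρ, let χ be a smooth positive character of G, let X₁, …, X_ℓ be left-invariant vector fields on G, let k ∈ ℕ and p ∈ [1,∞). Then there exist constants c₁, c₂ > 0 (depending only on χ, the vector fields, k and p) such that for every smooth function f on G, c₁ · Σ_{m=0}^{k} Σ_{J ∈ {1,…,ℓ}^m} ‖χ · X_J f‖_{L^p(ρ)} ≤ Σ_{m=0}^{k} Σ_{J ∈ {1,…,ℓ}^m} ‖X_J(χ f)‖_{L^p(ρ)} ≤ c₂ · Σ_{m=0}^{k} Σ_{J ∈ {1,…,ℓ}^m} ‖χ · X_J f‖_{L^p(ρ)}, where X_J = X_{j₁}⋯X_{j_m} for J = (j₁,…,j_m), the empty word (m = 0) giving the identity operator; the inequalities are understood in [0,∞]. -/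
open Manifold MeasureTheory ENNReal

/-- Iterated application `X_J = X_{j₁} ⋯ X_{j_m}` of a family of operators,
for a word `J = (j₁, …, j_m)`; the empty word gives the identity operator. -/
def applyWord {G : Type*} {ℓ : ℕ} (X : Fin ℓ → ((G → ℝ) → (G → ℝ))) :
    (m : ℕ) → (Fin m → Fin ℓ) → (G → ℝ) → (G → ℝ)
  | 0, _, f => f
  | m + 1, J, f => X (J 0) (applyWord X m (fun i => J i.succ) f)

lemma applyWord_snoc {G : Type*} {ℓ : ℕ} (X : Fin ℓ → ((G → ℝ) → (G → ℝ))) :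
    ∀ (m : ℕ) (J : Fin m → Fin ℓ) (i : Fin ℓ) (f : G → ℝ),
      applyWord X (m + 1) (Fin.snoc J i) f = applyWord X m J (X i f)
  | 0, J, i, f => by
      show X ((Fin.snoc J i : Fin 1 → Fin ℓ) 0) f = X i f
      simp [Fin.snoc]
  | m + 1, J, i, f => by
      show X ((Fin.snoc J i : Fin (m+2) → Fin ℓ) 0) (applyWord X (m + 1) (fun t => (Fin.snoc J i : Fin (m+2) → Fin ℓ) t.succ) f)
        = X (J 0) (applyWord X m (fun t => J t.succ) (X i f))
      have h0 : (Fin.snoc J i : Fin (m + 2) → Fin ℓ) 0 = J 0 := by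
        have : (0 : Fin (m + 2)) = Fin.castSucc 0 := rfl
        rw [this, Fin.snoc_castSucc]
      have h1 : (fun t : Fin (m + 1) => (Fin.snoc J i : Fin (m + 2) → Fin ℓ) t.succ)
          = Fin.snoc (fun t : Fin m => J t.succ) i := by
        funext t
        refine Fin.lastCases ?_ (fun s => ?_) t
        · simp
        · rw [Fin.succ_castSucc, Fin.snoc_castSucc, Fin.snoc_castSucc]
      rw [h0, h1, applyWord_snoc X m _ i f]

lemma applyWord_S {G : Type*} {ℓ : ℕ} (S : (G → ℝ) → Prop)
    (X : Fin ℓ → ((G → ℝ) → (G → ℝ))) (hX : ∀ i f, S f → S (X i f)) :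
    ∀ (m : ℕ) (J : Fin m → Fin ℓ) (f : G → ℝ), S f → S (applyWord X m J f)
  | 0, _, f, hf => hf
  | m + 1, J, f, hf => hX _ _ (applyWord_S S X hX m _ f hf)

lemma applyWord_add_smul {G : Type*} {ℓ : ℕ} (S : (G → ℝ) → Prop)
    (X : Fin ℓ → ((G → ℝ) → (G → ℝ)))
    (hX : ∀ i f, S f → S (X i f))
    (hadd : ∀ i f g, S f → S g → X i (f + g) = X i f + X i g)
    (hsmul : ∀ (i) (c : ℝ) (f), S f → X i (c • f) = c • X i f)
    (hSadd : ∀ f g, S f → S g → S (f + g))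
    (hSsmul : ∀ (c : ℝ) (f), S f → S (c • f)) :
    ∀ (m : ℕ) (J : Fin m → Fin ℓ) (g h : G → ℝ) (c : ℝ), S g → S h →
      applyWord X m J (g + c • h) = applyWord X m J g + c • applyWord X m J h
  | 0, _, g, h, c, _, _ => rfl
  | m + 1, J, g, h, c, hg, hh => by
      show X (J 0) (applyWord X m (fun t => J t.succ) (g + c • h)) = _
      rw [applyWord_add_smul S X hX hadd hsmul hSadd hSsmul m _ g h c hg hh,
        hadd _ _ _ (applyWord_S S X hX m _ g hg)
          (hSsmul c _ (applyWord_S S X hX m _ h hh)),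
        hsmul _ c _ (applyWord_S S X hX m _ h hh)]
      rfl

lemma sum_words_succ {ℓ m : ℕ} (F : (Fin (m + 1) → Fin ℓ) → ℝ≥0∞) :
    ∑ J : Fin (m + 1) → Fin ℓ, F J
      = ∑ i : Fin ℓ, ∑ J : Fin m → Fin ℓ, F (Fin.snoc J i) := by
  calc ∑ J : Fin (m + 1) → Fin ℓ, F J
      = ∑ q : Fin ℓ × (Fin m → Fin ℓ), F (Fin.snoc q.2 q.1) :=
        (Fintype.sum_equiv (Fin.snocEquiv (fun _ => Fin ℓ)) _ _ (fun q => rfl)).symm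
    _ = ∑ i : Fin ℓ, ∑ J : Fin m → Fin ℓ, F (Fin.snoc J i) := Fintype.sum_prod_type _

lemma key {G : Type*} {ℓ : ℕ} (S : (G → ℝ) → Prop) (N : (G → ℝ) → ℝ≥0∞)
    (X Z : Fin ℓ → ((G → ℝ) → (G → ℝ)))
    (hXS : ∀ i f, S f → S (X i f)) (hZS : ∀ i f, S f → S (Z i f))
    (hZadd : ∀ i f g, S f → S g → Z i (f + g) = Z i f + Z i g)
    (hZsmul : ∀ (i) (c : ℝ) (f), S f → Z i (c • f) = c • Z i f)
    (hSadd : ∀ f g, S f → S g → S (f + g))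
    (hSsmul : ∀ (c : ℝ) (f), S f → S (c • f))
    (c : Fin ℓ → ℝ) (hZX : ∀ i f, S f → Z i f = X i f + c i • f)
    (hN : ∀ (g h : G → ℝ) (cc : ℝ), S g → S h →
      N (g + cc • h) ≤ N g + ENNReal.ofReal |cc| * N h)
    (m : ℕ) :
    ∃ C : ℝ, 0 < C ∧ ∀ f, S f →
      (∑ J : Fin m → Fin ℓ, N (applyWord Z m J f)) ≤
        ENNReal.ofReal C *
          ∑ n ∈ Finset.range (m + 1), ∑ J : Fin n → Fin ℓ, N (applyWord X n J f) := by
  induction m with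
  | zero =>
      refine ⟨1, one_pos, fun f hf => ?_⟩
      simp [applyWord]
  | succ m ih =>
      obtain ⟨C, hC, hb⟩ := ih
      set K : ℝ := ∑ i : Fin ℓ, |c i| with hK
      have hK0 : 0 ≤ K := Finset.sum_nonneg fun i _ => abs_nonneg _
      refine ⟨C + K * C + 1, by positivity, fun f hf => ?_⟩
      set T : (G → ℝ) → ℝ≥0∞ :=
        fun g => ∑ n ∈ Finset.range (m + 1), ∑ J : Fin n → Fin ℓ, N (applyWord X n J g)
        with hT
      set T' : (G → ℝ) → ℝ≥0∞ :=
        fun g => ∑ n ∈ Finset.range (m + 2), ∑ J : Fin n → Fin ℓ, N (applyWord X n J g)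
        with hT'
      have hTT' : ∀ g, T g ≤ T' g := fun g =>
        Finset.sum_le_sum_of_subset (Finset.range_subset_range.2 (by omega))
      -- snoc reindex
      have step1 : ∑ J : Fin (m + 1) → Fin ℓ, N (applyWord Z (m + 1) J f)
          = ∑ i : Fin ℓ, ∑ J : Fin m → Fin ℓ, N (applyWord Z m J (Z i f)) := by
        rw [sum_words_succ]
        exact Finset.sum_congr rfl fun i _ => Finset.sum_congr rfl fun J _ => by
          rw [applyWord_snoc]
      -- expand Z i f
      have step2 : ∀ (i : Fin ℓ) (J : Fin m → Fin ℓ),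
          N (applyWord Z m J (Z i f)) ≤
            N (applyWord Z m J (X i f)) + ENNReal.ofReal |c i| * N (applyWord Z m J f) := by
        intro i J
        rw [hZX i f hf, applyWord_add_smul S Z hZS hZadd hZsmul hSadd hSsmul m J _ f (c i)
          (hXS i f hf) hf]
        exact hN _ _ _ (applyWord_S S Z hZS m J _ (hXS i f hf)) (applyWord_S S Z hZS m J f hf)
      have step3 : ∑ J : Fin (m + 1) → Fin ℓ, N (applyWord Z (m + 1) J f) ≤
          (∑ i : Fin ℓ, ∑ J : Fin m → Fin ℓ, N (applyWord Z m J (X i f)))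
            + (∑ i : Fin ℓ, ENNReal.ofReal |c i|) * ∑ J : Fin m → Fin ℓ, N (applyWord Z m J f) := by
        rw [step1, Finset.sum_mul, ← Finset.sum_add_distrib]
        refine Finset.sum_le_sum fun i _ => ?_
        rw [Finset.mul_sum, ← Finset.sum_add_distrib]
        exact Finset.sum_le_sum fun J _ => step2 i J
      -- bound first part
      have hA : ∑ i : Fin ℓ, ∑ J : Fin m → Fin ℓ, N (applyWord Z m J (X i f)) ≤
          ENNReal.ofReal C * T' f := by
        calc ∑ i : Fin ℓ, ∑ J : Fin m → Fin ℓ, N (applyWord Z m J (X i f))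
            ≤ ∑ i : Fin ℓ, ENNReal.ofReal C * T (X i f) :=
              Finset.sum_le_sum fun i _ => hb (X i f) (hXS i f hf)
          _ = ENNReal.ofReal C * ∑ i : Fin ℓ, T (X i f) := by rw [Finset.mul_sum]
          _ ≤ ENNReal.ofReal C * T' f := by
              refine mul_le_mul_right ?_ _
              have : ∑ i : Fin ℓ, T (X i f)
                  = ∑ n ∈ Finset.range (m + 1), ∑ J : Fin (n + 1) → Fin ℓ,
                      N (applyWord X (n + 1) J f) := by
                rw [hT, Finset.sum_comm]
                refine Finset.sum_congr rfl fun n _ => ?_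
                rw [sum_words_succ (fun J => N (applyWord X (n + 1) J f))]
                refine Finset.sum_congr rfl fun i _ => Finset.sum_congr rfl fun J _ => ?_
                rw [applyWord_snoc]
              rw [this]
              have hT'f : T' f
                  = ∑ n ∈ Finset.range (m + 2), ∑ J : Fin n → Fin ℓ, N (applyWord X n J f) := rfl
              rw [hT'f, Finset.sum_range_succ'
                (fun n => ∑ J : Fin n → Fin ℓ, N (applyWord X n J f)) (m + 1)]
              exact le_add_right le_rfl
      -- bound second part
      have hB : (∑ i : Fin ℓ, ENNReal.ofReal |c i|) * ∑ J : Fin m → Fin ℓ, N (applyWord Z m J f)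
          ≤ ENNReal.ofReal (K * C) * T' f := by
        have h1 : (∑ i : Fin ℓ, ENNReal.ofReal |c i|) = ENNReal.ofReal K := by
          rw [hK, ENNReal.ofReal_sum_of_nonneg fun i _ => abs_nonneg _]
        rw [h1, ENNReal.ofReal_mul hK0, mul_assoc]
        exact mul_le_mul_right ((hb f hf).trans (mul_le_mul_right (hTT' f) _)) _
      calc ∑ J : Fin (m + 1) → Fin ℓ, N (applyWord Z (m + 1) J f)
          ≤ ENNReal.ofReal C * T' f + ENNReal.ofReal (K * C) * T' f :=
            step3.trans (add_le_add hA hB)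
        _ = ENNReal.ofReal (C + K * C) * T' f := by
            rw [← add_mul, ← ENNReal.ofReal_add hC.le (by positivity)]
        _ ≤ ENNReal.ofReal (C + K * C + 1) * T' f := by
            exact mul_le_mul_left (ENNReal.ofReal_le_ofReal (by linarith)) _

lemma key' {G : Type*} {ℓ : ℕ} (S : (G → ℝ) → Prop) (N : (G → ℝ) → ℝ≥0∞)
    (X Z : Fin ℓ → ((G → ℝ) → (G → ℝ)))
    (hXS : ∀ i f, S f → S (X i f)) (hZS : ∀ i f, S f → S (Z i f))
    (hZadd : ∀ i f g, S f → S g → Z i (f + g) = Z i f + Z i g)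
    (hZsmul : ∀ (i) (c : ℝ) (f), S f → Z i (c • f) = c • Z i f)
    (hSadd : ∀ f g, S f → S g → S (f + g))
    (hSsmul : ∀ (c : ℝ) (f), S f → S (c • f))
    (c : Fin ℓ → ℝ) (hZX : ∀ i f, S f → Z i f = X i f + c i • f)
    (hN : ∀ (g h : G → ℝ) (cc : ℝ), S g → S h →
      N (g + cc • h) ≤ N g + ENNReal.ofReal |cc| * N h)
    (k : ℕ) :
    ∃ C : ℝ, 0 < C ∧ ∀ f, S f →
      (∑ m ∈ Finset.range (k + 1), ∑ J : Fin m → Fin ℓ, N (applyWord Z m J f)) ≤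
        ENNReal.ofReal C *
          ∑ n ∈ Finset.range (k + 1), ∑ J : Fin n → Fin ℓ, N (applyWord X n J f) := by
  choose C hCpos hCb using key S N X Z hXS hZS hZadd hZsmul hSadd hSsmul c hZX hN
  refine ⟨∑ m ∈ Finset.range (k + 1), C m, Finset.sum_pos (fun m _ => hCpos m) ⟨0, by simp⟩,
    fun f hf => ?_⟩
  calc ∑ m ∈ Finset.range (k + 1), ∑ J : Fin m → Fin ℓ, N (applyWord Z m J f)
      ≤ ∑ m ∈ Finset.range (k + 1), ENNReal.ofReal (C m) *
          ∑ n ∈ Finset.range (k + 1), ∑ J : Fin n → Fin ℓ, N (applyWord X n J f) := by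
        refine Finset.sum_le_sum fun m hm => ?_
        refine (hCb m f hf).trans (mul_le_mul_right ?_ _)
        refine Finset.sum_le_sum_of_subset (Finset.range_subset_range.2 ?_)
        exact Nat.succ_le_succ (Nat.lt_succ_iff.1 (Finset.mem_range.1 hm))
    _ = ENNReal.ofReal (∑ m ∈ Finset.range (k + 1), C m) *
          ∑ n ∈ Finset.range (k + 1), ∑ J : Fin n → Fin ℓ, N (applyWord X n J f) := by
        rw [ENNReal.ofReal_sum_of_nonneg fun m _ => (hCpos m).le, Finset.sum_mul]

lemma conj_word {G : Type*} {ℓ : ℕ} (S : (G → ℝ) → Prop)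
    (X : Fin ℓ → ((G → ℝ) → (G → ℝ))) (χ : G → ℝ) (c : Fin ℓ → ℝ)
    (hSχ : S χ)
    (hSmul : ∀ f g, S f → S g → S (f * g))
    (hSadd : ∀ f g, S f → S g → S (f + g))
    (hSsmul : ∀ (cc : ℝ) (f), S f → S (cc • f))
    (hXS : ∀ i f, S f → S (X i f))
    (hleib : ∀ i f g, S f → S g → X i (f * g) = f * X i g + g * X i f)
    (hchar : ∀ i, X i χ = c i • χ) :
    ∀ (m : ℕ) (J : Fin m → Fin ℓ) (f : G → ℝ), S f →
      applyWord X m J (χ * f)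
        = χ * applyWord (fun i g => X i g + c i • g) m J f
  | 0, _, f, _ => rfl
  | m + 1, J, f, hf => by
      have hZS : ∀ i g, S g → S ((fun i g => X i g + c i • g) i g) :=
        fun i g hg => hSadd _ _ (hXS i g hg) (hSsmul (c i) g hg)
      set g : G → ℝ := applyWord (fun i g => X i g + c i • g) m (fun t => J t.succ) f with hg
      have hSg : S g := applyWord_S S _ hZS m _ f hf
      show X (J 0) (applyWord X m (fun t => J t.succ) (χ * f)) = _
      rw [conj_word S X χ c hSχ hSmul hSadd hSsmul hXS hleib hchar m _ f hf,
        hleib (J 0) χ g hSχ hSg, hchar (J 0)]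
      show χ * X (J 0) g + g * (c (J 0) • χ)
        = χ * (X (J 0) g + c (J 0) • g)
      funext x
      simp only [Pi.add_apply, Pi.mul_apply, Pi.smul_apply, smul_eq_mul]
      ring


/-- Let `G` be a Lie group with right Haar measure `ρ`, `χ` a smooth
positive character of `G`, `X₁, …, X_ℓ` left-invariant vector fields on `G`, `k ∈ ℕ`
and `p ∈ [1,∞)`. Then there exist constants `c₁, c₂ > 0` such that for every smooth
`f : G → ℝ`,
`c₁ Σ_{m ≤ k} Σ_J ‖χ·X_J f‖_{L^p(ρ)} ≤ Σ_{m ≤ k} Σ_J ‖X_J(χ f)‖_{L^p(ρ)}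
  ≤ c₂ Σ_{m ≤ k} Σ_J ‖χ·X_J f‖_{L^p(ρ)}`,
the inequalities being understood in `[0,∞]`. -/
theorem stmt_16
    {E : Type*} [NormedAddCommGroup E] [NormedSpace ℝ E]
    {H : Type*} [TopologicalSpace H] {I : ModelWithCorners ℝ E H}
    {G : Type*} [TopologicalSpace G] [ChartedSpace H G] [Group G] [LieGroup I (⊤ : ℕ∞) G]
    [MeasurableSpace G] [BorelSpace G]
    (ρ : Measure G) [ρ.IsMulRightInvariant] [IsFiniteMeasureOnCompacts ρ]
    [ρ.IsOpenPosMeasure]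
    (χ : G → ℝ) (hχpos : ∀ x, 0 < χ x) (hχsmooth : ContMDiff I 𝓘(ℝ) (⊤ : ℕ∞) χ)
    (hχhom : ∀ x y : G, χ (x * y) = χ x * χ y)
    (ℓ : ℕ) (X : Fin ℓ → ((G → ℝ) → (G → ℝ)))
    (hXsmooth : ∀ i, ∀ f : G → ℝ, ContMDiff I 𝓘(ℝ) (⊤ : ℕ∞) f → ContMDiff I 𝓘(ℝ) (⊤ : ℕ∞) (X i f))
    (hXadd : ∀ i, ∀ f g : G → ℝ, ContMDiff I 𝓘(ℝ) (⊤ : ℕ∞) f → ContMDiff I 𝓘(ℝ) (⊤ : ℕ∞) g →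
      X i (f + g) = X i f + X i g)
    (hXsmul : ∀ i, ∀ (c : ℝ) (f : G → ℝ), ContMDiff I 𝓘(ℝ) (⊤ : ℕ∞) f → X i (c • f) = c • X i f)
    (hXleibniz : ∀ i, ∀ f g : G → ℝ, ContMDiff I 𝓘(ℝ) (⊤ : ℕ∞) f → ContMDiff I 𝓘(ℝ) (⊤ : ℕ∞) g →
      X i (f * g) = f * X i g + g * X i f)
    (hXleftinv : ∀ i, ∀ (y : G) (f : G → ℝ), ContMDiff I 𝓘(ℝ) (⊤ : ℕ∞) f →
      X i (fun x => f (y * x)) = fun x => X i f (y * x))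
    (k : ℕ) (p : ℝ) (hp : 1 ≤ p) :
    ∃ c₁ c₂ : ℝ, 0 < c₁ ∧ 0 < c₂ ∧
      ∀ f : G → ℝ, ContMDiff I 𝓘(ℝ) (⊤ : ℕ∞) f →
        (ENNReal.ofReal c₁ *
            ∑ m ∈ Finset.range (k + 1), ∑ J : Fin m → Fin ℓ,
              eLpNorm (fun x => χ x * applyWord X m J f x) (ENNReal.ofReal p) ρ ≤
          ∑ m ∈ Finset.range (k + 1), ∑ J : Fin m → Fin ℓ,
            eLpNorm (applyWord X m J (fun x => χ x * f x)) (ENNReal.ofReal p) ρ) ∧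
        (∑ m ∈ Finset.range (k + 1), ∑ J : Fin m → Fin ℓ,
            eLpNorm (applyWord X m J (fun x => χ x * f x)) (ENNReal.ofReal p) ρ ≤
          ENNReal.ofReal c₂ *
            ∑ m ∈ Finset.range (k + 1), ∑ J : Fin m → Fin ℓ,
              eLpNorm (fun x => χ x * applyWord X m J f x) (ENNReal.ofReal p) ρ) := by
  
  classical
  set S : (G → ℝ) → Prop := fun f => ContMDiff I 𝓘(ℝ) (⊤ : ℕ∞) f with hS
  have hSadd : ∀ f g, S f → S g → S (f + g) := fun f g hf hg => hf.add hg
  have hSsmul : ∀ (cc : ℝ) (f), S f → S (cc • f) := fun cc f hf => (contMDiff_const : ContMDiff I 𝓘(ℝ) (⊤ : ℕ∞) fun _ : G => cc).smul hf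
  have hSmul : ∀ f g, S f → S g → S (f * g) := fun f g hf hg => hf.mul hg
  have hχcont : Continuous χ := hχsmooth.continuous
  -- the character eigenvalues
  set c : Fin ℓ → ℝ := fun i => X i χ 1 with hc
  have hchar : ∀ i, X i χ = c i • χ := by
    intro i
    funext y
    have h1 := hXleftinv i y χ hχsmooth
    have h2 : (fun x => χ (y * x)) = χ y • χ := by
      funext x; simp [hχhom y x]
    rw [h2, hXsmul i (χ y) χ hχsmooth] at h1
    have h3 := congrFun h1 1
    simp only [Pi.smul_apply, smul_eq_mul, mul_one] at h3
    have h4 : X i χ y = χ y * X i χ 1 := h3.symm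
    simp [h4, hc, mul_comm]
  set Z : Fin ℓ → ((G → ℝ) → (G → ℝ)) := fun i g => X i g + c i • g with hZ
  have hZS : ∀ i f, S f → S (Z i f) := fun i f hf =>
    hSadd _ _ (hXsmooth i f hf) (hSsmul (c i) f hf)
  have hZadd : ∀ i f g, S f → S g → Z i (f + g) = Z i f + Z i g := by
    intro i f g hf hg
    simp only [hZ, hXadd i f g hf hg, smul_add]
    abel
  have hZsmul : ∀ (i) (cc : ℝ) (f), S f → Z i (cc • f) = cc • Z i f := by
    intro i cc f hf
    simp only [hZ, hXsmul i cc f hf, smul_add, smul_comm (c i) cc]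
  have hZX : ∀ i f, S f → Z i f = X i f + c i • f := fun i f _ => rfl
  have hXZ : ∀ i f, S f → X i f = Z i f + (fun i => -c i) i • f := by
    intro i f _
    simp only [hZ, neg_smul]
    abel
  -- the norm functional
  set N : (G → ℝ) → ℝ≥0∞ := fun g => eLpNorm (fun x => χ x * g x) (ENNReal.ofReal p) ρ with hN
  have hq1 : (1 : ℝ≥0∞) ≤ ENNReal.ofReal p := ENNReal.one_le_ofReal.2 hp
  have hNineq : ∀ (g h : G → ℝ) (cc : ℝ), S g → S h →
      N (g + cc • h) ≤ N g + ENNReal.ofReal |cc| * N h := by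
    intro g h cc hg hh
    have e : (fun x => χ x * (g + cc • h) x)
        = (fun x => χ x * g x) + cc • (fun x => χ x * h x) := by
      funext x
      simp only [Pi.add_apply, Pi.smul_apply, smul_eq_mul]
      ring
    have hgm : AEStronglyMeasurable (fun x => χ x * g x) ρ :=
      (hχcont.mul hg.continuous).aestronglyMeasurable
    have hhm : AEStronglyMeasurable (fun x => χ x * h x) ρ :=
      (hχcont.mul hh.continuous).aestronglyMeasurable
    calc N (g + cc • h)
        = eLpNorm ((fun x => χ x * g x) + cc • (fun x => χ x * h x)) (ENNReal.ofReal p) ρ := by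
          rw [hN]; simp only; rw [e]
      _ ≤ eLpNorm (fun x => χ x * g x) (ENNReal.ofReal p) ρ
            + eLpNorm (cc • (fun x => χ x * h x)) (ENNReal.ofReal p) ρ :=
          eLpNorm_add_le hgm (hhm.const_smul cc) hq1
      _ ≤ N g + ENNReal.ofReal |cc| * N h := by
          refine add_le_add le_rfl ?_
          refine (eLpNorm_const_smul_le).trans ?_
          rw [← Real.norm_eq_abs, ofReal_norm]
  obtain ⟨C₂, hC₂, hb₂⟩ := key' S N X Z hXsmooth hZS hZadd hZsmul hSadd hSsmul c hZX hNineq k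
  obtain ⟨D, hD, hbD⟩ := key' S N Z X hZS hXsmooth hXadd hXsmul hSadd hSsmul
    (fun i => -c i) hXZ hNineq k
  refine ⟨D⁻¹, C₂, inv_pos.2 hD, hC₂, fun f hf => ?_⟩
  have hmid : ∀ (m : ℕ) (J : Fin m → Fin ℓ),
      applyWord X m J (fun x => χ x * f x) = fun x => χ x * applyWord Z m J f x :=
    fun m J => conj_word S X χ c hχsmooth hSmul hSadd hSsmul hXsmooth hXleibniz hchar m J f hf
  have hmidN : ∀ (m : ℕ) (J : Fin m → Fin ℓ),
      eLpNorm (applyWord X m J (fun x => χ x * f x)) (ENNReal.ofReal p) ρ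
        = N (applyWord Z m J f) := by
    intro m J
    rw [hmid m J]
  have hgoalrw : ∑ m ∈ Finset.range (k + 1), ∑ J : Fin m → Fin ℓ,
      eLpNorm (applyWord X m J (fun x => χ x * f x)) (ENNReal.ofReal p) ρ
      = ∑ m ∈ Finset.range (k + 1), ∑ J : Fin m → Fin ℓ, N (applyWord Z m J f) :=
    Finset.sum_congr rfl fun m _ => Finset.sum_congr rfl fun J _ => hmidN m J
  have hXrw : ∑ m ∈ Finset.range (k + 1), ∑ J : Fin m → Fin ℓ,
      eLpNorm (fun x => χ x * applyWord X m J f x) (ENNReal.ofReal p) ρ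
      = ∑ m ∈ Finset.range (k + 1), ∑ J : Fin m → Fin ℓ, N (applyWord X m J f) := rfl
  rw [hgoalrw, hXrw]
  constructor
  · -- lower bound
    have h1 := hbD f hf
    calc ENNReal.ofReal D⁻¹ * ∑ m ∈ Finset.range (k + 1), ∑ J : Fin m → Fin ℓ,
          N (applyWord X m J f)
        ≤ ENNReal.ofReal D⁻¹ * (ENNReal.ofReal D *
            ∑ n ∈ Finset.range (k + 1), ∑ J : Fin n → Fin ℓ, N (applyWord Z n J f)) :=
          mul_le_mul_right h1 _
      _ = ∑ n ∈ Finset.range (k + 1), ∑ J : Fin n → Fin ℓ, N (applyWord Z n J f) := by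
          rw [← mul_assoc, ← ENNReal.ofReal_mul (by positivity),
            inv_mul_cancel₀ hD.ne', ENNReal.ofReal_one, one_mul]
  · exact hb₂ f hf
end
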